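/- Let H be a real Hilbert space, S ⊂ H a nonempty closed convex set, and 0 < τ̲ < τ̄ < 2. Let (p^k) be a sequence in H and, for each k, let φ_k(p) = ⟪g_k, p⟫ + c_k be an affine functional such that φ_k(p) ≤ 0 for all p ∈ S, and suppose that for each k: if φ_k(p^k) > 0 then p^{k+1} = p^k − τ_k (φ_k(p^k)/‖g_k‖²) g_k for some τ_k ∈ [τ̲, τ̄], and otherwise p^{k+1} = p^k. If every weak cluster point of (p^k) belongs to S, then (p^k) converges weakly to some point of S. -/

import Mathlib

open scoped RealInnerProductSpace
open Filter

/-- Bounded sequences in a real Hilbert space have weakly convergent subsequences. -/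
lemma exists_weak_subseq {H : Type*} [NormedAddCommGroup H] [InnerProductSpace ℝ H]
    [CompleteSpace H] (p : ℕ → H) (M : ℝ) (hb : ∀ k, ‖p k‖ ≤ M) :
    ∃ (q : H) (φ : ℕ → ℕ), StrictMono φ ∧
      ∀ y : H, Tendsto (fun j => ⟪y, p (φ j)⟫) atTop (nhds ⟪y, q⟫) := by
  have hM0 : 0 ≤ M := le_trans (norm_nonneg _) (hb 0)
  -- diagonal extraction via sequential compactness of a product of intervals
  set s : Set (ℕ → ℝ) := Set.univ.pi (fun _ => Set.Icc (-(M*M)) (M*M)) with hs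
  have hcomp : IsCompact s := isCompact_univ_pi (fun _ => isCompact_Icc)
  have hFmem : ∀ j, (fun i => ⟪p i, p j⟫) ∈ s := by
    intro j
    intro i _
    have h1 : |⟪p i, p j⟫| ≤ ‖p i‖ * ‖p j‖ := abs_real_inner_le_norm _ _
    have h2 : ‖p i‖ * ‖p j‖ ≤ M * M :=
      mul_le_mul (hb i) (hb j) (norm_nonneg _) hM0
    have := abs_le.1 (h1.trans h2)
    exact ⟨this.1, this.2⟩
  obtain ⟨L, -, φ, hφ, hconv⟩ := hcomp.isSeqCompact hFmem
  have hconv' : ∀ i, Tendsto (fun j => ⟪p i, p (φ j)⟫) atTop (nhds (L i)) := by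
    intro i
    exact (tendsto_pi_nhds.1 hconv) i
  -- the set of y for which the inner products converge
  set Conv : Set H := {y | ∃ l, Tendsto (fun j => ⟪y, p (φ j)⟫) atTop (nhds l)} with hConv
  have hadd : ∀ y z, y ∈ Conv → z ∈ Conv → y + z ∈ Conv := by
    rintro y z ⟨l, hl⟩ ⟨m, hm⟩
    exact ⟨l + m, by simpa [inner_add_left] using hl.add hm⟩
  have hsmul : ∀ (a : ℝ) y, y ∈ Conv → a • y ∈ Conv := by
    rintro a y ⟨l, hl⟩
    exact ⟨a * l, by simpa [real_inner_smul_left] using hl.const_mul a⟩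
  let A : Submodule ℝ H :=
    { carrier := Conv
      add_mem' := fun {y z} hy hz => hadd y z hy hz
      zero_mem' := ⟨0, by simpa using tendsto_const_nhds⟩
      smul_mem' := fun a {y} hy => hsmul a y hy }
  -- Conv is closed under limits
  have hclos : ∀ y ∈ closure (A : Set H), y ∈ A := by
    intro y hy
    have hc : CauchySeq (fun j => ⟪y, p (φ j)⟫) := by
      rw [Metric.cauchySeq_iff]
      intro ε hε
      obtain ⟨y', hy'A, hy'⟩ := Metric.mem_closure_iff.1 hy (ε / (3 * (M + 1)))
        (by positivity)
      obtain ⟨l, hl⟩ := hy'A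
      have hcau := hl.cauchySeq
      rw [Metric.cauchySeq_iff] at hcau
      obtain ⟨N, hN⟩ := hcau (ε / 3) (by positivity)
      refine ⟨N, fun m hm n hn => ?_⟩
      have hbnd : ∀ j, dist (⟪y, p (φ j)⟫) (⟪y', p (φ j)⟫) ≤ ε / 3 := by
        intro j
        have h1 : dist (⟪y, p (φ j)⟫) (⟪y', p (φ j)⟫) = |⟪y - y', p (φ j)⟫| := by
          rw [Real.dist_eq, ← inner_sub_left]
        rw [h1]
        have h2 : |⟪y - y', p (φ j)⟫| ≤ ‖y - y'‖ * ‖p (φ j)‖ := abs_real_inner_le_norm _ _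
        have h3 : ‖y - y'‖ * ‖p (φ j)‖ ≤ ‖y - y'‖ * M :=
          mul_le_mul_of_nonneg_left (hb _) (norm_nonneg _)
        have h4 : ‖y - y'‖ < ε / (3 * (M + 1)) := by
          rwa [← dist_eq_norm]
        have h5 : ‖y - y'‖ * M ≤ ε / (3 * (M + 1)) * M :=
          mul_le_mul_of_nonneg_right h4.le hM0
        have h6 : ε / (3 * (M + 1)) * M ≤ ε / 3 := by
          rw [div_mul_eq_mul_div, div_le_div_iff₀ (by positivity) (by norm_num)]
          nlinarith
        linarith
      calc dist (⟪y, p (φ m)⟫) (⟪y, p (φ n)⟫)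
          ≤ dist (⟪y, p (φ m)⟫) (⟪y', p (φ m)⟫) + dist (⟪y', p (φ m)⟫) (⟪y', p (φ n)⟫)
            + dist (⟪y', p (φ n)⟫) (⟪y, p (φ n)⟫) := dist_triangle4 _ _ _ _
        _ < ε := by
            have hx := hN m hm n hn
            have h1 := hbnd m
            have h2 := hbnd n
            rw [dist_comm (⟪y, p (φ n)⟫) (⟪y', p (φ n)⟫)] at h2
            linarith
    exact cauchySeq_tendsto_of_complete hc
  -- all of H converges
  set K : Submodule ℝ H := (Submodule.span ℝ (Set.range p)).topologicalClosure with hK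
  haveI : CompleteSpace K := (Submodule.span ℝ (Set.range p)).isClosed_topologicalClosure.completeSpace_coe
  have hspan : Submodule.span ℝ (Set.range p) ≤ A := by
    rw [Submodule.span_le]
    rintro _ ⟨i, rfl⟩
    exact ⟨L i, hconv' i⟩
  have hKA : K ≤ A := by
    intro y hy
    have : y ∈ closure ((Submodule.span ℝ (Set.range p) : Set H)) := hy
    exact hclos y (closure_mono hspan this)
  have hall : ∀ y : H, y ∈ A := by
    intro y
    obtain ⟨a, ha, b, hbmem, rfl⟩ := K.exists_add_mem_mem_orthogonal y
    refine A.add_mem (hKA ha) ?_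
    refine ⟨0, ?_⟩
    have hz : ∀ j, ⟪b, p (φ j)⟫ = (0:ℝ) := by
      intro j
      have hpK : p (φ j) ∈ K :=
        (Submodule.le_topologicalClosure _) (Submodule.subset_span ⟨φ j, rfl⟩)
      have := hbmem (p (φ j)) hpK
      rwa [real_inner_comm] at this
    simpa [hz] using (tendsto_const_nhds : Tendsto (fun _ : ℕ => (0:ℝ)) atTop (nhds 0))
  -- build the limit functional
  choose l hl using fun y => (hall y : ∃ l, _)
  have hbound : ∀ y, |l y| ≤ M * ‖y‖ := by
    intro y
    have habs : Tendsto (fun j => |⟪y, p (φ j)⟫|) atTop (nhds (|l y|)) := (hl y).abs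
    refine le_of_tendsto' habs (fun j => ?_)
    calc |⟪y, p (φ j)⟫| ≤ ‖y‖ * ‖p (φ j)‖ := abs_real_inner_le_norm _ _
      _ ≤ ‖y‖ * M := mul_le_mul_of_nonneg_left (hb _) (norm_nonneg _)
      _ = M * ‖y‖ := mul_comm _ _
  let f : H →ₗ[ℝ] ℝ :=
    { toFun := l
      map_add' := fun y z => by
        refine tendsto_nhds_unique (hl (y + z)) ?_
        simpa [inner_add_left] using (hl y).add (hl z)
      map_smul' := fun a y => by
        refine tendsto_nhds_unique (hl (a • y)) ?_
        simpa [real_inner_smul_left] using (hl y).const_mul a }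
  let fc : H →L[ℝ] ℝ := f.mkContinuous M (fun y => by
    exact (Real.norm_eq_abs _).trans_le (hbound y))
  refine ⟨(InnerProductSpace.toDual ℝ H).symm fc, φ, hφ, fun y => ?_⟩
  have hq : ⟪y, (InnerProductSpace.toDual ℝ H).symm fc⟫ = l y := by
    rw [real_inner_comm]
    exact InnerProductSpace.toDual_symm_apply
  rw [hq]
  exact hl y

/-- If every weak cluster point of the iterates of the generic linear
separation–projection method belongs to the nonempty closed convex set `S`, then the iterates
converge weakly to a point of `S`. -/
theorem separation_projection_weak_convergence {H : Type*} [NormedAddCommGroup H]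
    [InnerProductSpace ℝ H] [CompleteSpace H]
    (S : Set H) (hSne : S.Nonempty) (hScl : IsClosed S) (hScv : Convex ℝ S)
    (τmin τmax : ℝ) (hτ0 : 0 < τmin) (hτ1 : τmin < τmax) (hτ2 : τmax < 2)
    (p : ℕ → H) (g : ℕ → H) (c : ℕ → ℝ)
    (hsep : ∀ k, ∀ q ∈ S, ⟪g k, q⟫ + c k ≤ 0)
    (hstep : ∀ k,
      (0 < ⟪g k, p k⟫ + c k →
        ∃ τ ∈ Set.Icc τmin τmax,
          p (k + 1) = p k - ((τ * (⟪g k, p k⟫ + c k)) / ‖g k‖ ^ 2) • g k) ∧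
      (⟪g k, p k⟫ + c k ≤ 0 → p (k + 1) = p k))
    (hcluster : ∀ q : H,
      (∃ φ : ℕ → ℕ, StrictMono φ ∧
        ∀ y : H, Filter.Tendsto (fun j => ⟪y, p (φ j)⟫) Filter.atTop (nhds ⟪y, q⟫)) →
      q ∈ S) :
    ∃ q ∈ S, ∀ y : H, Filter.Tendsto (fun k => ⟪y, p k⟫) Filter.atTop (nhds ⟪y, q⟫) := by
  obtain ⟨q0, hq0⟩ := hSne
  -- Fejér monotonicity
  have fejer : ∀ q' ∈ S, ∀ k, ‖p (k + 1) - q'‖ ≤ ‖p k - q'‖ := by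
    intro q' hq' k
    rcases le_or_gt (⟪g k, p k⟫ + c k) 0 with h | h
    · rw [(hstep k).2 h]
    · obtain ⟨τ, hτ, heq⟩ := (hstep k).1 h
      have hg : g k ≠ 0 := by
        intro hg0
        have h1 := hsep k q' hq'
        rw [hg0, inner_zero_left] at h1
        rw [hg0, inner_zero_left] at h
        linarith
      have hng : (0:ℝ) < ‖g k‖ ^ 2 := pow_pos (norm_pos_iff.2 hg) 2
      set φv : ℝ := ⟪g k, p k⟫ + c k with hφv
      set t : ℝ := τ * φv / ‖g k‖ ^ 2 with ht
      have htg : t * ‖g k‖ ^ 2 = τ * φv := by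
        rw [ht]; field_simp
      have ht0 : 0 ≤ t := by
        apply div_nonneg _ hng.le
        have := hτ.1
        nlinarith
      have hip : φv ≤ ⟪g k, p k - q'⟫ := by
        rw [inner_sub_right]
        have := hsep k q' hq'
        linarith
      have hsq : ‖p (k + 1) - q'‖ ^ 2 ≤ ‖p k - q'‖ ^ 2 := by
        have hrw : p (k + 1) - q' = (p k - q') - t • g k := by
          rw [heq]; abel
        rw [hrw, norm_sub_sq_real, real_inner_smul_right, norm_smul]
        have hns : (‖t‖ * ‖g k‖) ^ 2 = t ^ 2 * ‖g k‖ ^ 2 := by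
          rw [mul_pow, Real.norm_eq_abs, sq_abs]
        rw [hns]
        have hcomm : ⟪p k - q', g k⟫ = ⟪g k, p k - q'⟫ := real_inner_comm _ _
        rw [hcomm]
        -- suffices: t^2 * ‖g‖^2 ≤ 2 * t * ⟪g, p k - q'⟫
        have h1 : t ^ 2 * ‖g k‖ ^ 2 = t * (τ * φv) := by
          rw [sq]; rw [mul_assoc]; rw [htg]
        have h2 : τ * φv ≤ 2 * φv := by nlinarith [hτ.2]
        have h3 : t * (τ * φv) ≤ t * (2 * φv) := mul_le_mul_of_nonneg_left h2 ht0
        have h4 : t * (2 * φv) ≤ 2 * (t * ⟪g k, p k - q'⟫) := by nlinarith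
        nlinarith
      have := Real.sqrt_le_sqrt hsq
      rwa [Real.sqrt_sq (norm_nonneg _), Real.sqrt_sq (norm_nonneg _)] at this
  have hanti : ∀ q' ∈ S, Antitone fun k => ‖p k - q'‖ := fun q' hq' =>
    antitone_nat_of_succ_le (fejer q' hq')
  -- boundedness
  set M : ℝ := ‖p 0 - q0‖ + ‖q0‖ with hM
  have hb : ∀ k, ‖p k‖ ≤ M := by
    intro k
    have h1 : ‖p k‖ ≤ ‖p k - q0‖ + ‖q0‖ := by
      have := norm_add_le (p k - q0) q0
      rwa [sub_add_cancel] at this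
    have h2 : ‖p k - q0‖ ≤ ‖p 0 - q0‖ := hanti q0 hq0 (Nat.zero_le k)
    linarith
  -- distances to points of S converge
  have hlim : ∀ q' ∈ S, ∃ d : ℝ, Filter.Tendsto (fun k => ‖p k - q'‖) Filter.atTop (nhds d) := by
    intro q' hq'
    refine ⟨_, tendsto_atTop_ciInf (hanti q' hq') ⟨0, ?_⟩⟩
    rintro x ⟨k, rfl⟩
    exact norm_nonneg _
  -- inner products against differences of points of S converge
  have hinner : ∀ q1 ∈ S, ∀ q2 ∈ S,
      ∃ α : ℝ, Filter.Tendsto (fun k => ⟪q1 - q2, p k⟫) Filter.atTop (nhds α) := by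
    intro q1 hq1 q2 hq2
    obtain ⟨d1, hd1⟩ := hlim q1 hq1
    obtain ⟨d2, hd2⟩ := hlim q2 hq2
    refine ⟨(d2 ^ 2 - d1 ^ 2 + ‖q1‖ ^ 2 - ‖q2‖ ^ 2) / 2, ?_⟩
    have heq : ∀ k, ⟪q1 - q2, p k⟫
        = (‖p k - q2‖ ^ 2 - ‖p k - q1‖ ^ 2 + ‖q1‖ ^ 2 - ‖q2‖ ^ 2) / 2 := by
      intro k
      have e1 : ‖p k - q1‖ ^ 2 = ‖p k‖ ^ 2 - 2 * ⟪p k, q1⟫ + ‖q1‖ ^ 2 := norm_sub_sq_real _ _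
      have e2 : ‖p k - q2‖ ^ 2 = ‖p k‖ ^ 2 - 2 * ⟪p k, q2⟫ + ‖q2‖ ^ 2 := norm_sub_sq_real _ _
      have e3 : ⟪q1 - q2, p k⟫ = ⟪p k, q1⟫ - ⟪p k, q2⟫ := by
        rw [inner_sub_left, real_inner_comm q1 (p k), real_inner_comm q2 (p k)]
      rw [e3]; linarith
    simp only [heq]
    have := ((hd2.pow 2).sub (hd1.pow 2)).add_const (‖q1‖ ^ 2)
    exact ((((hd2.pow 2).sub (hd1.pow 2)).add_const (‖q1‖ ^ 2)).sub_const (‖q2‖ ^ 2)).div_const 2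
  -- uniqueness of weak cluster points in S
  have huniq : ∀ q1 ∈ S, ∀ q2 ∈ S,
      (∃ φ : ℕ → ℕ, StrictMono φ ∧
        ∀ y : H, Filter.Tendsto (fun j => ⟪y, p (φ j)⟫) Filter.atTop (nhds ⟪y, q1⟫)) →
      (∃ φ : ℕ → ℕ, StrictMono φ ∧
        ∀ y : H, Filter.Tendsto (fun j => ⟪y, p (φ j)⟫) Filter.atTop (nhds ⟪y, q2⟫)) →
      q1 = q2 := by
    rintro q1 hq1 q2 hq2 ⟨φ1, hφ1, hc1⟩ ⟨φ2, hφ2, hc2⟩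
    obtain ⟨α, hα⟩ := hinner q1 hq1 q2 hq2
    have h1 : ⟪q1 - q2, q1⟫ = α :=
      tendsto_nhds_unique (hc1 (q1 - q2)) (hα.comp hφ1.tendsto_atTop)
    have h2 : ⟪q1 - q2, q2⟫ = α :=
      tendsto_nhds_unique (hc2 (q1 - q2)) (hα.comp hφ2.tendsto_atTop)
    have h3 : ⟪q1 - q2, q1 - q2⟫ = (0:ℝ) := by
      rw [inner_sub_right, h1, h2, sub_self]
    have h4 : q1 - q2 = 0 := inner_self_eq_zero.1 h3
    exact sub_eq_zero.1 h4
  -- existence of a weak cluster point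
  obtain ⟨q, φ, hφ, hq⟩ := exists_weak_subseq p M hb
  have hqS : q ∈ S := hcluster q ⟨φ, hφ, hq⟩
  refine ⟨q, hqS, fun y => ?_⟩
  by_contra hcon
  rw [Metric.tendsto_atTop] at hcon
  push_neg at hcon
  obtain ⟨ε, hε, hfr⟩ := hcon
  obtain ⟨ψ, hψ, hψp⟩ := Filter.extraction_of_frequently_atTop
    (Filter.frequently_atTop.2 hfr)
  obtain ⟨q', ρ, hρ, hq'⟩ := exists_weak_subseq (p ∘ ψ) M (fun k => hb _)
  have hclus : ∃ φ' : ℕ → ℕ, StrictMono φ' ∧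
      ∀ y : H, Filter.Tendsto (fun j => ⟪y, p (φ' j)⟫) Filter.atTop (nhds ⟪y, q'⟫) :=
    ⟨ψ ∘ ρ, hψ.comp hρ, fun y' => hq' y'⟩
  have hq'S : q' ∈ S := hcluster q' hclus
  have hqq : q' = q := huniq q' hq'S q hqS hclus ⟨φ, hφ, hq⟩
  rw [hqq] at hq'
  have := hq' y
  rw [Metric.tendsto_atTop] at this
  obtain ⟨N, hN⟩ := this ε hε
  have := hψp (ρ N)
  have h2 := hN N le_rfl
  simp only [Function.comp_apply] at h2
  linarith [this, h2]
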